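/- Fix a real N > 0 and a natural number l. For every natural number ν and every real x > 0, the complementary pre-Laguerre polynomial has the explicit form 𝒫_ν^N(x,l) = ν! · Σ_{μ=0}^{ν} binom(l,μ)·C(−N, ν−μ)·(x/N)^{ν−μ}·(1+x/N)^μ, where binom(l,μ) is the usual binomial coefficient (zero for μ > l) and C(r,k) = (∏_{i=0}^{k−1}(r−i))/k! is the generalized binomial coefficient. -/

import Mathlib

/-- Complementary pre-Laguerre polynomial:
`𝒫_ν^N(x,l) = x^(ν-l) (1+x/N)^(N+ν) (dᵛ/dtᵛ)(t^l (1+t/N)^(-N)) |_{t=x}`,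
with `x^(ν-l)` a zpow power, `t^l` a natural power, and rpow powers of `1+t/N`. -/
noncomputable def complPreLaguerre (N : ℝ) (l ν : ℕ) (x : ℝ) : ℝ :=
  x ^ ((ν : ℤ) - (l : ℤ)) * (1 + x / N) ^ (N + (ν : ℝ)) *
    iteratedDeriv ν (fun t : ℝ => t ^ l * (1 + t / N) ^ (-N)) x

/-- Generalized binomial coefficient `C(r,k) = (∏_{i<k} (r-i)) / k!`. -/
noncomputable def genBinom (r : ℝ) (k : ℕ) : ℝ :=
  (∏ i ∈ Finset.range k, (r - (i : ℝ))) / (Nat.factorial k : ℝ)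

/-- `∏_{i<k} (-N - i)` -/
noncomputable def Pprod (N : ℝ) (k : ℕ) : ℝ := ∏ i ∈ Finset.range k, (-N - (i : ℝ))

lemma Pprod_succ (N : ℝ) (k : ℕ) : Pprod N (k + 1) = Pprod N k * (-N - (k : ℝ)) :=
  Finset.prod_range_succ _ _

/-- The coefficient in the closed formula for the ν-th derivative. -/
noncomputable def cCoef (N : ℝ) (l ν μ : ℕ) : ℝ :=
  (ν.choose μ : ℝ) * (l.descFactorial μ : ℝ) * Pprod N (ν - μ) * (1 / N) ^ (ν - μ)

/-- Closed formula for the ν-th derivative. -/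
noncomputable def Ffun (N : ℝ) (l ν : ℕ) (x : ℝ) : ℝ :=
  ∑ μ ∈ Finset.range (ν + 1),
    cCoef N l ν μ * (x ^ ((l : ℤ) - (μ : ℤ)) * (1 + x / N) ^ (-N - ((ν - μ : ℕ) : ℝ)))

lemma descFactorial_succ_real (l μ : ℕ) :
    (l.descFactorial (μ + 1) : ℝ) = (l.descFactorial μ : ℝ) * ((l : ℝ) - (μ : ℝ)) := by
  rcases lt_or_ge μ l with h | h
  · rw [Nat.descFactorial_succ, Nat.cast_mul, Nat.cast_sub h.le]
    ring
  · rcases eq_or_lt_of_le h with rfl | h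
    · simp [Nat.descFactorial_succ]
    · rw [Nat.descFactorial_succ, Nat.descFactorial_eq_zero_iff_lt.mpr h]
      simp

lemma hasDerivAt_term (N : ℝ) (hN : 0 < N) (a : ℤ) (b : ℝ) (x : ℝ) (hx : 0 < x) :
    HasDerivAt (fun y : ℝ => y ^ a * (1 + y / N) ^ b)
      ((a : ℝ) * x ^ (a - 1) * (1 + x / N) ^ b
        + x ^ a * (1 / N * b * (1 + x / N) ^ (b - 1))) x := by
  have hR : 0 < 1 + x / N := by positivity
  have h1 : HasDerivAt (fun y : ℝ => y ^ a) ((a : ℝ) * x ^ (a - 1)) x :=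
    hasDerivAt_zpow a x (Or.inl hx.ne')
  have h2 : HasDerivAt (fun y : ℝ => 1 + y / N) (1 / N) x := by
    simpa using ((hasDerivAt_id x).div_const N).const_add 1
  have h3 := h2.rpow_const (p := b) (Or.inl hR.ne')
  exact h1.mul h3

lemma iteratedDeriv_eq_Ffun (N : ℝ) (hN : 0 < N) (l : ℕ) :
    ∀ ν : ℕ, ∀ x : ℝ, 0 < x →
      iteratedDeriv ν (fun t : ℝ => t ^ l * (1 + t / N) ^ (-N)) x = Ffun N l ν x := by
  intro ν
  induction ν with
  | zero =>
    intro x hx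
    simp [Ffun, cCoef, Pprod, iteratedDeriv_zero, zpow_natCast]
  | succ ν ih =>
    intro x hx
    have hR : (0 : ℝ) < 1 + x / N := by positivity
    rw [iteratedDeriv_succ]
    have hev : iteratedDeriv ν (fun t : ℝ => t ^ l * (1 + t / N) ^ (-N)) =ᶠ[nhds x]
        Ffun N l ν := by
      filter_upwards [eventually_gt_nhds hx] with y hy using ih y hy
    rw [hev.deriv_eq]
    have hF : HasDerivAt (Ffun N l ν)
        (∑ μ ∈ Finset.range (ν + 1), cCoef N l ν μ *
          ((((l : ℤ) - (μ : ℤ) : ℤ) : ℝ) * x ^ ((l : ℤ) - (μ : ℤ) - 1)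
              * (1 + x / N) ^ (-N - ((ν - μ : ℕ) : ℝ))
            + x ^ ((l : ℤ) - (μ : ℤ)) * (1 / N * (-N - ((ν - μ : ℕ) : ℝ))
              * (1 + x / N) ^ (-N - ((ν - μ : ℕ) : ℝ) - 1)))) x := by
      unfold Ffun
      exact HasDerivAt.fun_sum fun μ _ =>
        (hasDerivAt_term N hN ((l : ℤ) - (μ : ℤ)) (-N - ((ν - μ : ℕ) : ℝ)) x hx).const_mul
          (cCoef N l ν μ)
    rw [hF.deriv]
    -- now the combinatorial identity
    set R := 1 + x / N with hRdef
    -- A and B parts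
    set A : ℕ → ℝ := fun μ => cCoef N l ν μ *
      ((((l : ℤ) - (μ : ℤ) : ℤ) : ℝ) * x ^ ((l : ℤ) - (μ : ℤ) - 1)
        * R ^ (-N - ((ν - μ : ℕ) : ℝ))) with hA
    set B : ℕ → ℝ := fun μ => cCoef N l ν μ *
      (x ^ ((l : ℤ) - (μ : ℤ)) * (1 / N * (-N - ((ν - μ : ℕ) : ℝ))
        * R ^ (-N - ((ν - μ : ℕ) : ℝ) - 1))) with hB
    set T : ℕ → ℝ := fun μ => cCoef N l (ν + 1) μ *
      (x ^ ((l : ℤ) - (μ : ℤ)) * R ^ (-N - ((ν + 1 - μ : ℕ) : ℝ))) with hT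
    have claim1 : ∀ μ ≤ ν, T (μ + 1) = A μ + B (μ + 1) := by
      intro μ hμ
      rcases lt_or_eq_of_le hμ with h | h
      · have e1 : ν - μ = (ν - μ - 1) + 1 := by omega
        have e2 : ν - (μ + 1) = ν - μ - 1 := by omega
        have e3 : ν + 1 - (μ + 1) = (ν - μ - 1) + 1 := by omega
        set k := ν - μ - 1 with hk
        simp only [hT, hA, hB, cCoef, e1, e2, e3, Pprod_succ,
          Nat.choose_succ_succ, descFactorial_succ_real, Nat.cast_add, Nat.cast_one]
        push_cast
        have ex : x ^ ((l : ℤ) - ((μ : ℤ) + 1)) = x ^ ((l : ℤ) - (μ : ℤ) - 1) := by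
          ring_nf
        have er : R ^ (-N - ((k : ℝ) + 1)) = R ^ (-N - (k : ℝ) - 1) := by
          ring_nf
        rw [ex, er]
        ring
      · subst h
        have e1 : μ - μ = 0 := by omega
        have e2 : μ + 1 - (μ + 1) = 0 := by omega
        have e3 : μ - (μ + 1) = 0 := by omega
        simp only [hT, hA, hB, cCoef, e1, e2, e3, Nat.choose_self, Nat.choose_succ_self,
          descFactorial_succ_real]
        push_cast
        have ex : x ^ ((l : ℤ) - ((μ : ℤ) + 1)) = x ^ ((l : ℤ) - (μ : ℤ) - 1) := by
          ring_nf
        rw [ex]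
        ring
    have claim2 : T 0 = B 0 := by
      simp only [hT, hB, cCoef, Nat.sub_zero, Nat.choose_zero_right, Pprod_succ]
      push_cast
      have er : R ^ (-N - ((ν : ℝ) + 1)) = R ^ (-N - (ν : ℝ) - 1) := by ring_nf
      rw [er]
      ring
    have claim3 : B (ν + 1) = 0 := by
      simp [hB, cCoef, Nat.choose_succ_self]
    have hsplit : ∀ μ ∈ Finset.range (ν + 1), cCoef N l ν μ *
          ((((l : ℤ) - (μ : ℤ) : ℤ) : ℝ) * x ^ ((l : ℤ) - (μ : ℤ) - 1)
              * R ^ (-N - ((ν - μ : ℕ) : ℝ))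
            + x ^ ((l : ℤ) - (μ : ℤ)) * (1 / N * (-N - ((ν - μ : ℕ) : ℝ))
              * R ^ (-N - ((ν - μ : ℕ) : ℝ) - 1))) = A μ + B μ := by
      intro μ _
      simp only [hA, hB]
      ring
    rw [Finset.sum_congr rfl hsplit, Finset.sum_add_distrib]
    show _ = ∑ μ ∈ Finset.range (ν + 1 + 1), T μ
    rw [Finset.sum_range_succ' T]
    have : ∀ μ ∈ Finset.range (ν + 1), T (μ + 1) = A μ + B (μ + 1) := fun μ hμ =>
      claim1 μ (Nat.lt_succ_iff.mp (Finset.mem_range.mp hμ))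
    rw [Finset.sum_congr rfl this, Finset.sum_add_distrib, claim2]
    have : ∑ μ ∈ Finset.range (ν + 1), B (μ + 1) + B 0 = ∑ μ ∈ Finset.range (ν + 1), B μ := by
      rw [← Finset.sum_range_succ' B, Finset.sum_range_succ, claim3, add_zero]
    linarith [this]

theorem complPreLaguerre_explicit (N : ℝ) (hN : 0 < N) (l ν : ℕ) (x : ℝ) (hx : 0 < x) :
    complPreLaguerre N l ν x
      = (Nat.factorial ν : ℝ) *
          ∑ μ ∈ Finset.range (ν + 1),
            (Nat.choose l μ : ℝ) * genBinom (-N) (ν - μ)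
              * (x / N) ^ (ν - μ) * (1 + x / N) ^ μ := by
  have hR : (0 : ℝ) < 1 + x / N := by positivity
  rw [complPreLaguerre, iteratedDeriv_eq_Ffun N hN l ν x hx, Ffun, Finset.mul_sum,
    Finset.mul_sum]
  refine Finset.sum_congr rfl fun μ hμ => ?_
  have hμν : μ ≤ ν := Nat.lt_succ_iff.mp (Finset.mem_range.mp hμ)
  have hxpow : x ^ ((ν : ℤ) - (l : ℤ)) * x ^ ((l : ℤ) - (μ : ℤ)) = x ^ ((ν - μ : ℕ)) := by
    rw [← zpow_add₀ hx.ne']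
    have : (ν : ℤ) - (l : ℤ) + ((l : ℤ) - (μ : ℤ)) = ((ν - μ : ℕ) : ℤ) := by
      push_cast [Nat.cast_sub hμν]; ring
    rw [this, zpow_natCast]
  have hRpow : (1 + x / N) ^ (N + (ν : ℝ)) * (1 + x / N) ^ (-N - ((ν - μ : ℕ) : ℝ))
      = (1 + x / N) ^ μ := by
    rw [← Real.rpow_add hR]
    have : N + (ν : ℝ) + (-N - ((ν - μ : ℕ) : ℝ)) = (μ : ℝ) := by
      push_cast [Nat.cast_sub hμν]; ring
    rw [this, Real.rpow_natCast]
  have hdesc : (l.descFactorial μ : ℝ) = (μ.factorial : ℝ) * (l.choose μ : ℝ) := by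
    exact_mod_cast congrArg (Nat.cast (R := ℝ)) (Nat.descFactorial_eq_factorial_mul_choose l μ)
  have hfac : (ν.choose μ : ℝ) * (μ.factorial : ℝ) * ((ν - μ).factorial : ℝ)
      = (ν.factorial : ℝ) := by
    exact_mod_cast congrArg (Nat.cast (R := ℝ)) (Nat.choose_mul_factorial_mul_factorial hμν)
  have hdiv : ((x : ℝ) / N) ^ (ν - μ) = x ^ (ν - μ) * (1 / N) ^ (ν - μ) := by
    rw [div_pow, one_div, inv_pow]; ring
  calc x ^ ((ν : ℤ) - (l : ℤ)) * (1 + x / N) ^ (N + (ν : ℝ)) *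
        (cCoef N l ν μ * (x ^ ((l : ℤ) - (μ : ℤ)) * (1 + x / N) ^ (-N - ((ν - μ : ℕ) : ℝ))))
      = cCoef N l ν μ * (x ^ ((ν : ℤ) - (l : ℤ)) * x ^ ((l : ℤ) - (μ : ℤ))) *
        ((1 + x / N) ^ (N + (ν : ℝ)) * (1 + x / N) ^ (-N - ((ν - μ : ℕ) : ℝ))) := by ring
    _ = cCoef N l ν μ * x ^ ((ν - μ : ℕ)) * (1 + x / N) ^ μ := by rw [hxpow, hRpow]
    _ = (Nat.factorial ν : ℝ) *
        ((Nat.choose l μ : ℝ) * genBinom (-N) (ν - μ) * (x / N) ^ (ν - μ) * (1 + x / N) ^ μ) := by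
      rw [cCoef, genBinom, hdesc, hdiv, ← hfac]
      have : Pprod N (ν - μ) = ∏ i ∈ Finset.range (ν - μ), (-N - (i : ℝ)) := rfl
      rw [this]
      field_simp
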